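/- Let g = h ⊕ p, where h is a Lie algebra acting on a vector space p via a representation α, and η is an α-invariant h-valued antisymmetric bilinear form on p. Define a bracket on g extending the bracket of h by [h,p] = α(h)(p) and [p₁,p₂] = η(p₁,p₂). Then this bracket satisfies the Jacobi identity if and only if the curvature tensor R = α ∘ η satisfies the first Bianchi identity: R(p₁,p₂)p₃ + R(p₂,p₃)p₁ + R(p₃,p₁)p₂ = 0 for all p₁,p₂,p₃ ∈ p. -/

import Mathlib

attribute [local instance 100] LieRing.ofAssociativeRing

/-- The bracket on `g = h ⊕ p` extending the bracket of `h`, with `[h,p] = α(h)(p)` and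
`[p₁,p₂] = η(p₁,p₂)`. -/
def extBracket {H P : Type*} [LieRing H] [LieAlgebra ℂ H] [AddCommGroup P] [Module ℂ P]
    (α : H →ₗ⁅ℂ⁆ Module.End ℂ P) (η : P →ₗ[ℂ] P →ₗ[ℂ] H) :
    H × P → H × P → H × P :=
  fun a b => (⁅a.1, b.1⁆ + η a.2 b.2, α a.1 b.2 - α b.1 a.2)

/-- for a Lie algebra `h` acting on `p` via `α`, and an `α`-invariant
antisymmetric `h`-valued bilinear form `η` on `p`, the extended bracket on `g = h ⊕ p`
satisfies the Jacobi identity if and only if the curvature `R = α ∘ η` satisfies the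
first Bianchi identity. -/
theorem jacobi_iff_bianchi {H P : Type*} [LieRing H] [LieAlgebra ℂ H]
    [AddCommGroup P] [Module ℂ P]
    (α : H →ₗ⁅ℂ⁆ Module.End ℂ P) (η : P →ₗ[ℂ] P →ₗ[ℂ] H)
    (hanti : ∀ p q : P, η p q = -η q p)
    (hinv : ∀ (x : H) (p q : P), ⁅x, η p q⁆ = η (α x p) q + η p (α x q)) :
    (∀ a b c : H × P,
        extBracket α η a (extBracket α η b c) + extBracket α η b (extBracket α η c a) +
          extBracket α η c (extBracket α η a b) = 0) ↔
      (∀ p₁ p₂ p₃ : P,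
        α (η p₁ p₂) p₃ + α (η p₂ p₃) p₁ + α (η p₃ p₁) p₂ = 0) := by
  constructor
  · intro hJ p₁ p₂ p₃
    have h := congrArg Prod.snd (hJ (0, p₁) (0, p₂) (0, p₃))
    simp [extBracket] at h
    trans -(-(α (η p₂ p₃)) p₁ + -(α (η p₃ p₁)) p₂ + -(α (η p₁ p₂)) p₃)
    · abel
    · rw [h, neg_zero]
  · intro hB ⟨x, p⟩ ⟨y, q⟩ ⟨z, r⟩
    refine Prod.ext ?_ ?_
    · simp only [extBracket, Prod.fst_add, Prod.snd_add, map_add, map_sub, lie_add,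
        LinearMap.add_apply, LinearMap.sub_apply, hinv, Prod.fst_zero]
      rw [hanti ((α x) q) r, hanti ((α y) r) p, hanti ((α z) p) q]
      trans (⁅x, ⁅y, z⁆⁆ + ⁅y, ⁅z, x⁆⁆ + ⁅z, ⁅x, y⁆⁆)
      · abel
      · exact lie_jacobi x y z
    · simp only [extBracket, Prod.fst_add, Prod.snd_add, map_add, map_sub, lie_add,
        LinearMap.add_apply, LinearMap.sub_apply, Prod.snd_zero]
      rw [LieHom.map_lie, LieHom.map_lie, LieHom.map_lie]
      simp only [Ring.lie_def, LinearMap.sub_apply, Module.End.mul_apply, LinearMap.add_apply]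
      trans -(α (η q r) p + α (η r p) q + α (η p q) r)
      · abel
      · rw [hB q r p, neg_zero]
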